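/- Let (Φ_σ)_{σ ∈ (0,1]} be a family of maps from a compact set S ⊂ ℝ³ into a Hilbert space such that (i) ‖Φ_σ(p+k) - Φ_σ(p)‖ ≤ C|k|σ^{-1/2} for all applicable p, p+k ∈ S, and (ii) ‖Φ_σ(p) - Φ_{σ'}(p)‖ ≤ C σ^{1-δ} for 0 < σ' < σ ≤ 1 and some δ ∈ (0,1/3). Then there is C' such that for all σ ∈ (0,1] and p, p+k ∈ S, ‖Φ_σ(p+k) - Φ_σ(p)‖ ≤ C'|k|^{(2/3)(1-δ)}. -/
import Mathlib


/-- Let `(Φ_σ)_{σ ∈ (0,1]}` be a uniformly bounded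
(`‖Φ_σ(p)‖ ≤ 1`) family of maps from a compact `S ⊆ ℝ³` into a Hilbert space
such that (i) `‖Φ_σ(p+k) - Φ_σ(p)‖ ≤ C |k| σ^{-1/2}` for `p, p+k ∈ S`, and
(ii) `‖Φ_σ(p) - Φ_{σ'}(p)‖ ≤ C σ^{1-δ}` for `0 < σ' < σ ≤ 1`, with
`δ ∈ (0, 1/3)`.  Then there is `C'` such that for all `σ ∈ (0,1]` and
`p, p+k ∈ S`, `‖Φ_σ(p+k) - Φ_σ(p)‖ ≤ C' |k|^{(2/3)(1-δ)}`. -/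
theorem stmt_14
    {F : Type*} [NormedAddCommGroup F] [InnerProductSpace ℂ F]
    (S : Set (EuclideanSpace ℝ (Fin 3))) (hS : IsCompact S)
    (Φ : ℝ → EuclideanSpace ℝ (Fin 3) → F)
    (C δ : ℝ) (hδ : δ ∈ Set.Ioo (0:ℝ) (1/3))
    (hbdd : ∀ σ ∈ Set.Ioc (0:ℝ) 1, ∀ p ∈ S, ‖Φ σ p‖ ≤ 1)
    (h1 : ∀ σ ∈ Set.Ioc (0:ℝ) 1, ∀ p ∈ S, ∀ k, p + k ∈ S →
      ‖Φ σ (p + k) - Φ σ p‖ ≤ C * ‖k‖ * σ ^ (-(1/2) : ℝ))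
    (h2 : ∀ σ' σ : ℝ, 0 < σ' → σ' < σ → σ ≤ 1 → ∀ p ∈ S,
      ‖Φ σ p - Φ σ' p‖ ≤ C * σ ^ ((1 : ℝ) - δ)) :
    ∃ C' : ℝ, ∀ σ ∈ Set.Ioc (0:ℝ) 1, ∀ p ∈ S, ∀ k, p + k ∈ S →
      ‖Φ σ (p + k) - Φ σ p‖ ≤ C' * ‖k‖ ^ ((2/3) * (1 - δ)) := by
  obtain ⟨hδ0, hδ3⟩ := hδ
  rcases Set.eq_empty_or_nonempty S with hSe | ⟨p0, hp0⟩
  · exact ⟨0, by intro σ hσ p hp; simp [hSe] at hp⟩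
  have hC : 0 ≤ C := by
    have h := h2 (1/2) 1 (by norm_num) (by norm_num) le_rfl p0 hp0
    rw [Real.one_rpow, mul_one] at h
    exact le_trans (norm_nonneg _) h
  refine ⟨3 * C + 2, ?_⟩
  rintro σ ⟨hσ0, hσ1⟩ p hp k hpk
  have hα0 : 0 < (2/3) * (1 - δ) := by nlinarith
  by_cases hk0 : k = 0
  · simp [hk0, Real.zero_rpow hα0.ne']
  have hkn : 0 < ‖k‖ := norm_pos_iff.mpr hk0
  have hαnn : (0:ℝ) ≤ ‖k‖ ^ ((2/3) * (1 - δ)) := Real.rpow_nonneg hkn.le _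
  by_cases hk1 : 1 ≤ ‖k‖
  · have h1le : (1:ℝ) ≤ ‖k‖ ^ ((2/3) * (1 - δ)) := Real.one_le_rpow hk1 hα0.le
    have hb : ‖Φ σ (p + k) - Φ σ p‖ ≤ 2 := by
      calc ‖Φ σ (p + k) - Φ σ p‖ ≤ ‖Φ σ (p + k)‖ + ‖Φ σ p‖ := norm_sub_le _ _
        _ ≤ 2 := by
          linarith [hbdd σ ⟨hσ0, hσ1⟩ _ hpk, hbdd σ ⟨hσ0, hσ1⟩ p hp]
    nlinarith
  push_neg at hk1
  set τ : ℝ := ‖k‖ ^ ((2:ℝ)/3) with hτdef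
  have hτ0 : 0 < τ := Real.rpow_pos_of_pos hkn _
  have hτ1 : τ < 1 := Real.rpow_lt_one hkn.le hk1 (by norm_num)
  have key23 : ‖k‖ ^ ((2:ℝ)/3) ≤ ‖k‖ ^ ((2/3) * (1 - δ)) :=
    Real.rpow_le_rpow_of_exponent_ge hkn hk1.le (by nlinarith)
  have hstep : ∀ s : ℝ, τ ≤ s → s ≤ 1 → 0 < s →
      ‖Φ s (p + k) - Φ s p‖ ≤ C * ‖k‖ ^ ((2/3) * (1 - δ)) := by
    intro s hs1 hs2 hs0
    have hb := h1 s ⟨hs0, hs2⟩ p hp k hpk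
    have hmono : s ^ (-(1/2) : ℝ) ≤ τ ^ (-(1/2) : ℝ) :=
      Real.rpow_le_rpow_of_nonpos hτ0 hs1 (by norm_num)
    have hτpow : τ ^ (-(1/2) : ℝ) = ‖k‖ ^ (-(1/3) : ℝ) := by
      rw [hτdef, ← Real.rpow_mul hkn.le]; norm_num
    have hcomb : ‖k‖ * ‖k‖ ^ (-(1/3) : ℝ) = ‖k‖ ^ ((2:ℝ)/3) := by
      nth_rewrite 1 [← Real.rpow_one ‖k‖]
      rw [← Real.rpow_add hkn]; norm_num
    calc ‖Φ s (p + k) - Φ s p‖ ≤ C * ‖k‖ * s ^ (-(1/2) : ℝ) := hb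
      _ ≤ C * ‖k‖ * τ ^ (-(1/2) : ℝ) := by
          apply mul_le_mul_of_nonneg_left hmono (by positivity)
      _ = C * ‖k‖ ^ ((2:ℝ)/3) := by rw [hτpow, mul_assoc, hcomb]
      _ ≤ C * ‖k‖ ^ ((2/3) * (1 - δ)) := by
          apply mul_le_mul_of_nonneg_left key23 hC
  by_cases hστ : τ ≤ σ
  · have := hstep σ hστ hσ1 hσ0
    nlinarith
  · push_neg at hστ
    have hA := h2 σ τ hσ0 hστ hτ1.le (p + k) hpk
    have hB := h2 σ τ hσ0 hστ hτ1.le p hp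
    have hM := hstep τ le_rfl hτ1.le hτ0
    have hτδ : τ ^ ((1:ℝ) - δ) = ‖k‖ ^ ((2/3) * (1 - δ)) := by
      rw [hτdef, ← Real.rpow_mul hkn.le]
    have htri : ‖Φ σ (p + k) - Φ σ p‖ ≤
        ‖Φ τ (p + k) - Φ σ (p + k)‖ + ‖Φ τ (p + k) - Φ τ p‖ + ‖Φ τ p - Φ σ p‖ := by
      have : Φ σ (p + k) - Φ σ p =
          -(Φ τ (p + k) - Φ σ (p + k)) + (Φ τ (p + k) - Φ τ p) + (Φ τ p - Φ σ p) := by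
        abel
      rw [this]
      calc ‖-(Φ τ (p + k) - Φ σ (p + k)) + (Φ τ (p + k) - Φ τ p) + (Φ τ p - Φ σ p)‖
          ≤ ‖-(Φ τ (p + k) - Φ σ (p + k)) + (Φ τ (p + k) - Φ τ p)‖ + ‖Φ τ p - Φ σ p‖ :=
            norm_add_le _ _
        _ ≤ ‖-(Φ τ (p + k) - Φ σ (p + k))‖ + ‖Φ τ (p + k) - Φ τ p‖ + ‖Φ τ p - Φ σ p‖ := by
            linarith [norm_add_le (-(Φ τ (p + k) - Φ σ (p + k))) (Φ τ (p + k) - Φ τ p)]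
        _ = ‖Φ τ (p + k) - Φ σ (p + k)‖ + ‖Φ τ (p + k) - Φ τ p‖ + ‖Φ τ p - Φ σ p‖ := by
            rw [norm_neg]
    rw [hτδ] at hA hB
    linarith
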